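/- If the pair (2^ω, Y) satisfies UU for a topological space Y, then the pair (ω^ω, Y) satisfies UU. -/

import Mathlib

namespace S7

def out (t : ℕ) (α : ℕ → ℕ) (n : ℕ) : Bool :=
  if n + 2 ≤ 2 ^ t then true
  else if α 0 = 0 then out (t + 1) (fun k => α (k + 1)) n
  else if n + 1 < 2 ^ t * (2 * α 0 - 1) then true
  else if n + 1 = 2 ^ t * (2 * α 0 - 1) then false
  else out 0 (fun k => α (k + 1)) (n - 2 ^ t * (2 * α 0 - 1))
termination_by (n, n + 2 - 2 ^ t)
decreasing_by
  · apply Prod.Lex.right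
    have h1 : 2 ^ t < 2 ^ (t + 1) := by
      have := Nat.one_le_two_pow (n := t); omega
    omega
  · apply Prod.Lex.left
    have h2 : 1 ≤ 2 ^ t * (2 * α 0 - 1) :=
      Nat.one_le_iff_ne_zero.mpr (Nat.mul_ne_zero (by positivity) (by omega))
    omega

def cons (m : ℕ) (β : ℕ → ℕ) : ℕ → ℕ := fun n => match n with
  | 0 => m
  | n + 1 => β n

def pz (t : ℕ) (γ : ℕ → ℕ) : ℕ → ℕ := fun n => if n < t then 0 else γ (n - t)

lemma shift_cons (m : ℕ) (β : ℕ → ℕ) : (fun k => cons m β (k + 1)) = β := rfl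

lemma out_zero' (t : ℕ) (α : ℕ → ℕ) (n : ℕ) (hα : ∀ i, α i = 0) :
    out t α n = true := by
  revert hα
  induction t, α, n using out.induct with
  | case1 t α n h => intro _; rw [out]; simp [h]
  | case2 t α n h h0 ih =>
    intro hα
    rw [out]; simp only [if_pos h0, if_neg h]
    exact ih (fun i => hα (i + 1))
  | case3 t α n h h0 h1 => exact fun hα => absurd (hα 0) h0
  | case4 t α n h h0 h1 h2 => exact fun hα => absurd (hα 0) h0
  | case5 t α n h h0 h1 h2 ih => exact fun hα => absurd (hα 0) h0

lemma out_cons_zero (t : ℕ) (β : ℕ → ℕ) (n : ℕ) :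
    out t (cons 0 β) n = out (t + 1) β n := by
  by_cases h : n + 2 ≤ 2 ^ t
  · have h' : n + 2 ≤ 2 ^ (t + 1) := le_trans h (Nat.pow_le_pow_right (by norm_num) (by omega))
    rw [out]; conv_rhs => rw [out]
    simp [h, h']
  · rw [out]; simp only [if_neg h]
    simp [cons, shift_cons]

lemma out_cons_succ (t m : ℕ) (β : ℕ → ℕ) (n : ℕ) :
    out t (cons (m + 1) β) n =
      (if n + 1 < 2 ^ t * (2 * m + 1) then true
       else if n + 1 = 2 ^ t * (2 * m + 1) then false
       else out 0 β (n - 2 ^ t * (2 * m + 1))) := by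
  have hc : cons (m + 1) β 0 = m + 1 := rfl
  have hℓ : 2 * cons (m + 1) β 0 - 1 = 2 * m + 1 := by rw [hc]; omega
  rw [out, hℓ, hc]
  simp only [shift_cons]
  by_cases h : n + 2 ≤ 2 ^ t
  · have h1 : n + 1 < 2 ^ t * (2 * m + 1) := by
      have : 2 ^ t ≤ 2 ^ t * (2 * m + 1) := Nat.le_mul_of_pos_right _ (by omega)
      omega
    simp [h, h1]
  · simp [h]

lemma out_pz (t' t : ℕ) (γ : ℕ → ℕ) (n : ℕ) :
    out t' (pz t γ) n = out (t' + t) γ n := by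
  induction t generalizing t' with
  | zero =>
    have : pz 0 γ = γ := by funext i; simp [pz]
    rw [this, Nat.add_zero]
  | succ t ih =>
    have hp : pz (t + 1) γ = cons 0 (pz t γ) := by
      funext i
      cases i with
      | zero => simp [pz, cons]
      | succ i =>
        simp only [pz, cons]
        by_cases h : i < t <;> simp [h, Nat.succ_lt_succ_iff]
    rw [hp, out_cons_zero, ih]
    ring_nf

lemma out_congr (t : ℕ) (α : ℕ → ℕ) (n : ℕ) :
    ∀ β : ℕ → ℕ, (∀ i, i ≤ (n + 2 - 2 ^ t) + n + 1 → α i = β i) →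
      out t α n = out t β n := by
  induction t, α, n using out.induct with
  | case1 t α n h =>
    intro β hag
    rw [out]; conv_rhs => rw [out]
    simp [h]
  | case2 t α n h h0 ih =>
    intro β hag
    have hb : β 0 = 0 := (hag 0 (by omega)).symm.trans h0
    have hpow : 2 ^ t < 2 ^ (t + 1) := by
      have := Nat.one_le_two_pow (n := t); omega
    rw [out]; conv_rhs => rw [out]
    simp only [if_neg h, h0, hb, if_pos rfl, if_true]
    apply ih
    intro i hi
    apply hag
    omega
  | case3 t α n h h0 h1 =>
    intro β hag
    have hb : β 0 = α 0 := (hag 0 (by omega)).symm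
    rw [out]; conv_rhs => rw [out]
    simp only [if_neg h, if_neg h0, hb, if_pos h1, if_true]
  | case4 t α n h h0 h1 h2 =>
    intro β hag
    have hb : β 0 = α 0 := (hag 0 (by omega)).symm
    rw [out]; conv_rhs => rw [out]
    simp only [if_neg h, if_neg h0, hb, if_neg h1, if_pos h2]
  | case5 t α n h h0 h1 h2 ih =>
    intro β hag
    have hb : β 0 = α 0 := (hag 0 (by omega)).symm
    have hℓ1 : 2 ^ t ≤ 2 ^ t * (2 * α 0 - 1) := Nat.le_mul_of_pos_right _ (by omega)
    have hpow : 1 ≤ 2 ^ t := Nat.one_le_two_pow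
    rw [out]; conv_rhs => rw [out]
    simp only [if_neg h, if_neg h0, hb, if_neg h1, if_neg h2]
    apply ih
    intro i hi
    apply hag
    omega

open Classical in
noncomputable def dec (x : ℕ → Bool) (n : ℕ) : ℕ :=
  if h : ∃ p, x p = false then
    if n < (Nat.find h + 1).factorization 2 then 0
    else if n = (Nat.find h + 1).factorization 2 then
      ((Nat.find h + 1) / 2 ^ ((Nat.find h + 1).factorization 2) + 1) / 2
    else dec (fun i => x (i + Nat.find h + 1)) (n - (Nat.find h + 1).factorization 2 - 1)
  else 0
termination_by n
decreasing_by omega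

lemma fact2 (q k : ℕ) : ((2 ^ q * (2 * k + 1)).factorization) 2 = q := by
  rw [Nat.factorization_mul (by positivity) (by omega)]
  rw [Nat.Prime.factorization_pow Nat.prime_two]
  simp [Nat.factorization_eq_zero_of_not_dvd (by omega : ¬ 2 ∣ (2 * k + 1))]

lemma two_adic_split (N : ℕ) :
    1 ≤ ((N + 1) / 2 ^ ((N + 1).factorization 2) + 1) / 2 ∧
    2 ^ ((N + 1).factorization 2) *
      (2 * (((N + 1) / 2 ^ ((N + 1).factorization 2) + 1) / 2 - 1) + 1) = N + 1 := by
  have hmul := Nat.ordProj_mul_ordCompl_eq_self (N + 1) 2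
  have hodd : ¬ 2 ∣ ((N + 1) / 2 ^ ((N + 1).factorization 2)) :=
    Nat.not_dvd_ordCompl Nat.prime_two (by omega)
  obtain ⟨t, ht⟩ : ∃ t', (N + 1).factorization 2 = t' := ⟨_, rfl⟩
  rw [ht] at hmul ⊢
  obtain ⟨o, ho⟩ : ∃ o', (N + 1) / 2 ^ t = o' := ⟨_, rfl⟩
  rw [ht, ho] at hodd
  rw [ho] at hmul ⊢
  refine ⟨by omega, ?_⟩
  have hov : 2 * ((o + 1) / 2 - 1) + 1 = o := by omega
  rw [hov]
  exact hmul

lemma dec_spec (x : ℕ → Bool) (h : ∃ p, x p = false) :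
    dec x = pz ((Nat.find h + 1).factorization 2)
      (cons (((Nat.find h + 1) / 2 ^ ((Nat.find h + 1).factorization 2) + 1) / 2)
        (dec (fun i => x (i + Nat.find h + 1)))) := by
  funext n
  rw [dec, dif_pos h]
  obtain ⟨t, ht⟩ : ∃ t', (Nat.find h + 1).factorization 2 = t' := ⟨_, rfl⟩
  rw [ht]
  by_cases h1 : n < t
  · simp [pz, h1]
  · rw [if_neg h1]
    by_cases h2 : n = t
    · rw [if_pos h2]
      simp [pz, h1, h2, cons]
    · rw [if_neg h2]
      simp only [pz, if_neg h1]
      have h3 : n - t = (n - t - 1) + 1 := by omega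
      rw [h3]
      rfl

lemma out_dec_step (x : ℕ → Bool) (h : ∃ p, x p = false) (n : ℕ) :
    out 0 (dec x) n =
      (if n < Nat.find h then true
       else if n = Nat.find h then false
       else out 0 (dec (fun i => x (i + Nat.find h + 1))) (n - Nat.find h - 1)) := by
  obtain ⟨hv1, hmul⟩ := two_adic_split (Nat.find h)
  rw [dec_spec x h, out_pz, Nat.zero_add]
  have hcv : (((Nat.find h + 1) / 2 ^ ((Nat.find h + 1).factorization 2) + 1) / 2) =
      ((((Nat.find h + 1) / 2 ^ ((Nat.find h + 1).factorization 2) + 1) / 2 - 1) + 1) := by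
    omega
  rw [hcv, out_cons_succ, hmul]
  obtain ⟨p, hp⟩ : ∃ p', Nat.find h = p' := ⟨_, rfl⟩
  rw [hp]
  by_cases c1 : n < p
  · rw [if_pos (by omega : n + 1 < p + 1), if_pos c1]
  · rw [if_neg (by omega : ¬ n + 1 < p + 1), if_neg c1]
    by_cases c2 : n = p
    · rw [if_pos (by omega : n + 1 = p + 1), if_pos c2]
    · rw [if_neg (by omega : ¬ n + 1 = p + 1), if_neg c2]
      congr 1

lemma out_dec (n : ℕ) : ∀ x : ℕ → Bool, out 0 (dec x) n = x n := by
  induction n using Nat.strong_induction_on with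
  | _ n ih =>
    intro x
    by_cases h : ∃ p, x p = false
    · rw [out_dec_step x h]
      by_cases c1 : n < Nat.find h
      · rw [if_pos c1]
        have hxn := Nat.find_min h c1
        simp only [Bool.not_eq_false] at hxn
        exact hxn.symm
      · rw [if_neg c1]
        by_cases c2 : n = Nat.find h
        · rw [if_pos c2, c2, Nat.find_spec h]
        · rw [if_neg c2]
          rw [ih (n - Nat.find h - 1) (by omega) _]
          exact congrArg x (by omega)
    · have hx : ∀ k, x k = true := by
        intro k
        by_contra hk
        exact h ⟨k, by simpa using hk⟩
      have hd : dec x = fun _ => 0 := by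
        funext i; rw [dec, dif_neg h]
      rw [hd, out_zero' 0 _ n (fun _ => rfl), hx n]

lemma dec_out_step (α : ℕ → ℕ) (hq : ∃ q, α q ≠ 0) (n : ℕ) :
    dec (fun k => out 0 α k) n =
      (if n < Nat.find hq then 0
       else if n = Nat.find hq then α (Nat.find hq)
       else dec (fun k => out 0 (fun i => α (i + Nat.find hq + 1)) k) (n - Nat.find hq - 1)) := by
  obtain ⟨q, hqdef⟩ : ∃ q', Nat.find hq = q' := ⟨_, rfl⟩
  have hzlt : ∀ i, i < q → α i = 0 := by
    intro i hi
    have := Nat.find_min hq (hqdef ▸ hi)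
    simpa using this
  have hv : α q ≠ 0 := hqdef ▸ Nat.find_spec hq
  rw [hqdef]
  obtain ⟨v, hvdef⟩ : ∃ v', α q = v' := ⟨_, rfl⟩
  rw [hvdef] at hv
  obtain ⟨ℓ, hℓdef⟩ : ∃ ℓ', 2 ^ q * (2 * (v - 1) + 1) = ℓ' := ⟨_, rfl⟩
  have hℓ1 : 1 ≤ ℓ := by
    rw [← hℓdef]
    exact Nat.one_le_iff_ne_zero.mpr (Nat.mul_ne_zero (by positivity) (by omega))
  have hα : α = pz q (cons v (fun i => α (i + q + 1))) := by
    funext i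
    simp only [pz, cons]
    by_cases h1 : i < q
    · rw [if_pos h1, hzlt i h1]
    · rw [if_neg h1]
      by_cases h2 : i = q
      · subst h2; rw [Nat.sub_self]; exact hvdef
      · have h3 : i - q = (i - q - 1) + 1 := by omega
        rw [h3]
        exact congrArg α (by omega)
  have hF : ∀ k, out 0 α k =
      (if k + 1 < ℓ then true else if k + 1 = ℓ then false
       else out 0 (fun i => α (i + q + 1)) (k - ℓ)) := by
    intro k
    conv_lhs => rw [hα]
    rw [out_pz, Nat.zero_add]
    have hcv : v = (v - 1) + 1 := by omega
    conv_lhs => rw [hcv]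
    rw [out_cons_succ, hℓdef]
  have hx : ∃ p', (fun k => out 0 α k) p' = false := by
    refine ⟨ℓ - 1, ?_⟩
    show out 0 α (ℓ - 1) = false
    rw [hF, if_neg (by omega), if_pos (by omega)]
  rw [dec, dif_pos hx]
  have hfind : Nat.find hx = ℓ - 1 := by
    rw [Nat.find_eq_iff]
    refine ⟨?_, ?_⟩
    · show out 0 α (ℓ - 1) = false
      rw [hF, if_neg (by omega), if_pos (by omega)]
    · intro m hm
      show ¬ out 0 α m = false
      rw [hF, if_pos (by omega)]
      simp
  rw [hfind]
  have hℓm1 : ℓ - 1 + 1 = ℓ := by omega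
  rw [hℓm1]
  have ht : ℓ.factorization 2 = q := by rw [← hℓdef]; exact fact2 q (v - 1)
  rw [ht]
  have hdiv : (ℓ / 2 ^ q + 1) / 2 = v := by
    rw [← hℓdef, Nat.mul_div_cancel_left _ (by positivity)]
    omega
  rw [hdiv]
  have hshift : (fun i => (fun k => out 0 α k) (i + (ℓ - 1) + 1)) =
      (fun k => out 0 (fun i => α (i + q + 1)) k) := by
    funext i
    show out 0 α (i + (ℓ - 1) + 1) = _
    rw [hF, if_neg (by omega), if_neg (by omega)]
    congr 1
    omega
  rw [hshift, hvdef]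

lemma dec_out (n : ℕ) : ∀ α : ℕ → ℕ, dec (fun k => out 0 α k) n = α n := by
  induction n using Nat.strong_induction_on with
  | _ n ih =>
    intro α
    by_cases hq : ∃ q, α q ≠ 0
    · rw [dec_out_step α hq]
      by_cases c1 : n < Nat.find hq
      · rw [if_pos c1]
        have := Nat.find_min hq c1
        simp only [ne_eq, not_not] at this
        exact this.symm
      · rw [if_neg c1]
        by_cases c2 : n = Nat.find hq
        · rw [if_pos c2, c2]
        · rw [if_neg c2]
          rw [ih (n - Nat.find hq - 1) (by omega) _]
          exact congrArg α (by omega)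
    · push_neg at hq
      have h2 : ¬ ∃ p', (fun k => out 0 α k) p' = false := by
        simp only [not_exists]
        intro p'
        rw [out_zero' 0 α p' hq]
        simp
      rw [dec, dif_neg h2]
      exact (hq n).symm

/-- The continuous bijection from Baire space onto Cantor space. -/
def f : (ℕ → ℕ) → (ℕ → Bool) := fun α n => out 0 α n

lemma f_bijective : Function.Bijective f := by
  rw [Function.bijective_iff_has_inverse]
  refine ⟨dec, ?_, ?_⟩
  · intro α
    funext n
    exact dec_out n α
  · intro x
    funext n
    exact out_dec n x

lemma f_continuous : Continuous f := by
  apply continuous_pi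
  intro n
  show Continuous fun α : ℕ → ℕ => out 0 α n
  have key : ∀ α : ℕ → ℕ,
      out 0 α n = out 0 (fun i => if h : i < 2 * n + 3 then α i else 0) n := by
    intro α
    apply out_congr
    intro i hi
    have hlt : i < 2 * n + 3 := by
      simp only [pow_zero] at hi
      omega
    show α i = if h : i < 2 * n + 3 then α i else 0
    rw [dif_pos hlt]
  have hcomp : (fun α : ℕ → ℕ => out 0 α n) =
      (fun v : Fin (2 * n + 3) → ℕ =>
        out 0 (fun i => if h : i < 2 * n + 3 then v ⟨i, h⟩ else 0) n) ∘
      (fun α (i : Fin (2 * n + 3)) => α i) := by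
    funext α
    simp only [Function.comp_apply]
    exact key α
  rw [hcomp]
  exact Continuous.comp continuous_of_discreteTopology
    (continuous_pi fun i => continuous_apply (i : ℕ))

end S7

/-- The pair (X, Y) satisfies UU: there is an open set `U ⊆ X × Y` such that
every open `W ⊆ Y` is the cross section `{y | (x, y) ∈ U}` for exactly one `x`. -/
def UU (X Y : Type*) [TopologicalSpace X] [TopologicalSpace Y] : Prop :=
  ∃ U : Set (X × Y), IsOpen U ∧
    ∀ W : Set Y, IsOpen W → ∃! x : X, {y | (x, y) ∈ U} = W

theorem stmt_7 (Y : Type*) [TopologicalSpace Y] (h : UU (ℕ → Bool) Y) :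
    UU (ℕ → ℕ) Y := by
  obtain ⟨U, hU, hsec⟩ := h
  refine ⟨{p : (ℕ → ℕ) × Y | (S7.f p.1, p.2) ∈ U}, ?_, ?_⟩
  · exact hU.preimage ((S7.f_continuous.comp continuous_fst).prodMk continuous_snd)
  · intro W hW
    obtain ⟨x, hx, hxu⟩ := hsec W hW
    obtain ⟨α, rfl⟩ := S7.f_bijective.surjective x
    refine ⟨α, hx, ?_⟩
    intro α' h'
    exact S7.f_bijective.injective (hxu (S7.f α') h')
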